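/- Let F be a 2-connected graph on a finite vertex set V ⊂ ℕ containing no forbidden path. Then the edge {min(V), max(V)} belongs to F. -/

import Mathlib

/-- `G` contains a forbidden path (see the paper): a path `v 0, …, v (k-1)`,
`k ≥ 4`, with `v 0` its largest vertex, `v (k-1)` the largest among
`v 1, …, v (k-1)`, and `v 1 > v (k-2)`. -/
def HasForbiddenPath (G : SimpleGraph ℕ) : Prop :=
  ∃ (k : ℕ) (v : ℕ → ℕ), 4 ≤ k ∧ Set.InjOn v (Set.Iio k) ∧
    (∀ i, i + 1 < k → G.Adj (v i) (v (i + 1))) ∧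
    (∀ i, i < k → v i ≤ v 0) ∧
    (∀ i, 1 ≤ i → i < k → v i ≤ v (k - 1)) ∧
    v (k - 2) < v 1

/-- `G` restricted to the vertex set `S` is connected: `S` is nonempty and any
two vertices of `S` are joined by a walk staying inside `S`. -/
def ConnOn (G : SimpleGraph ℕ) (S : Set ℕ) : Prop :=
  S.Nonempty ∧ ∀ a ∈ S, ∀ b ∈ S, ∃ w : G.Walk a b, ∀ x ∈ w.support, x ∈ S

/-- `G` is 2-connected on the vertex set `S`: connected on `S`, and still
connected after deleting any single vertex of `S`. -/
def TwoConnOn (G : SimpleGraph ℕ) (S : Set ℕ) : Prop :=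
  ConnOn G S ∧ ∀ x ∈ S, ConnOn G (S \ {x})

/-- Consecutive entries of a walk's support are adjacent. -/
lemma walk_support_chain {G : SimpleGraph ℕ} :
    ∀ {u v : ℕ} (w : G.Walk u v) (i : ℕ), i + 1 < w.support.length →
      G.Adj (w.support.getD i 0) (w.support.getD (i + 1) 0) := by
  intro u v w
  induction w with
  | nil => intro i hi; simp at hi
  | @cons u b v h p ih =>
      intro i hi
      rw [SimpleGraph.Walk.support_cons] at hi ⊢
      match i with
      | 0 =>
          simp only [List.getD_cons_zero, List.getD_cons_succ]
          rw [p.support_eq_cons, List.getD_cons_zero]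
          exact h
      | Nat.succ n =>
          simp only [List.getD_cons_succ]
          exact ih n (by simpa using hi)

theorem stmt7 (G : SimpleGraph ℕ) (V : Finset ℕ) (hV : V.Nonempty)
    (hedges : ∀ e ∈ G.edgeSet, ∀ x ∈ e, x ∈ V)
    (h2conn : TwoConnOn G ↑V) (hforb : ¬ HasForbiddenPath G) :
    G.Adj (V.min' hV) (V.max' hV) := by
  classical
  by_contra hne
  set m := V.min' hV with hm
  set M := V.max' hV with hM
  have hmV : m ∈ V := V.min'_mem hV
  have hMV : M ∈ V := V.max'_mem hV
  obtain ⟨⟨-, hconn⟩, hdel⟩ := h2conn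
  have hAdjV : ∀ {x y : ℕ}, G.Adj x y → x ∈ V ∧ y ∈ V := by
    intro x y h
    have he : s(x, y) ∈ G.edgeSet := h
    exact ⟨hedges _ he x (by simp), hedges _ he y (by simp)⟩
  -- m ≠ M
  have hmM : m ≠ M := by
    obtain ⟨⟨y, hyV, hym⟩, -⟩ := hdel m (by exact_mod_cast hmV)
    intro h
    have h1 : m ≤ y := V.min'_le y hyV
    have h2 : y ≤ M := V.le_max' y hyV
    exact hym (le_antisymm (h ▸ h2) h1)
  -- m has a neighbor
  have hNb : (V.filter fun x => G.Adj m x).Nonempty := by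
    obtain ⟨w, -⟩ := hconn m (by exact_mod_cast hmV) M (by exact_mod_cast hMV)
    have h := w.adj_snd (SimpleGraph.Walk.not_nil_of_ne hmM)
    exact ⟨_, Finset.mem_filter.2 ⟨(hAdjV h).2, h⟩⟩
  set a := (V.filter fun x => G.Adj m x).max' hNb with ha
  have haMem := (V.filter fun x => G.Adj m x).max'_mem hNb
  rw [Finset.mem_filter, ← ha] at haMem
  obtain ⟨haV, hma⟩ := haMem
  have hmaxNb : ∀ x, G.Adj m x → x ≤ a := fun x hx =>
    Finset.le_max' _ x (Finset.mem_filter.2 ⟨(hAdjV hx).2, hx⟩)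
  have haM : a ≠ M := fun h => hne (by rwa [h] at hma)
  have haltM : a < M := lt_of_le_of_ne (V.le_max' a haV) haM
  have hmlta : m < a := lt_of_le_of_ne (V.min'_le a haV) (G.ne_of_adj hma)
  -- key: find an edge from the `< a`-reachable set to a vertex > a
  have key : ∀ (u v : ℕ) (w : G.Walk u v), (∀ x ∈ w.support, x ≠ a) →
      (∃ wu : G.Walk m u, ∀ y ∈ wu.support, y < a) → ¬ (v < a) →
      ∃ c d, (∃ wc : G.Walk m c, ∀ y ∈ wc.support, y < a) ∧ G.Adj c d ∧ a < d := by
    intro u v w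
    induction w with
    | nil =>
        rintro hsup ⟨wu, hwu⟩ hv
        exact absurd (hwu _ wu.end_mem_support) hv
    | @cons u b v h p ih =>
        rintro hsup ⟨wu, hwu⟩ hv
        by_cases hb : b < a
        · have hsub : ∀ x ∈ p.support, x ∈ (SimpleGraph.Walk.cons h p).support := by
            intro x hx
            rw [SimpleGraph.Walk.support_cons]
            exact List.mem_cons_of_mem _ hx
          refine ih (fun x hx => hsup x (hsub x hx)) ⟨wu.concat h, ?_⟩ hv
          intro y hy
          rw [SimpleGraph.Walk.support_concat, List.mem_append,
            List.mem_singleton] at hy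
          rcases hy with hy | hy
          · exact hwu y hy
          · exact hy ▸ hb
        · have hba : b ≠ a := hsup b (by
            rw [SimpleGraph.Walk.support_cons]
            exact List.mem_cons_of_mem _ p.start_mem_support)
          exact ⟨u, b, ⟨wu, hwu⟩, h, lt_of_le_of_ne (not_lt.1 hb) (Ne.symm hba)⟩
  obtain ⟨-, hconn'⟩ := hdel a (by exact_mod_cast haV)
  obtain ⟨w0, hw0⟩ := hconn' m
      ⟨by exact_mod_cast hmV, fun h => absurd (Set.mem_singleton_iff.1 h) (ne_of_lt hmlta)⟩
      M ⟨by exact_mod_cast hMV, fun h => absurd (Set.mem_singleton_iff.1 h).symm haM⟩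
  obtain ⟨c, d, ⟨wc, hwc⟩, hcd, had⟩ :=
    key m M w0 (fun x hx => (hw0 x hx).2) ⟨SimpleGraph.Walk.nil, by simpa using hmlta⟩
      (not_lt.2 haltM.le)
  have hcV : c ∈ V := (hAdjV hcd).1
  have hcm : c ≠ m := by
    intro h
    rw [h] at hcd
    exact absurd (hmaxNb d hcd) (not_le.2 had)
  have hmc : m < c := lt_of_le_of_ne (V.min'_le c hcV) (Ne.symm hcm)
  -- take a path version of wc and reverse it
  set p := wc.bypass with hpdef
  have hp : p.IsPath := wc.bypass_isPath
  have hpsup : ∀ y ∈ p.support, y < a := fun y hy => hwc y (wc.support_bypass_subset hy)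
  set q : G.Walk c m := p.reverse with hq
  have hqsup : ∀ y ∈ q.support, y < a := by
    intro y hy
    rw [hq, SimpleGraph.Walk.support_reverse, List.mem_reverse] at hy
    exact hpsup y hy
  have hqnd : q.support.Nodup := hp.reverse.support_nodup
  -- the forbidden path as a list
  set T : List ℕ := q.support ++ [a] with hT
  set L : List ℕ := d :: T with hL
  set k := L.length with hk
  have hkq : k = q.support.length + 2 := by simp [hL, hT, hk]
  have hql : 2 ≤ q.support.length := by
    rw [SimpleGraph.Walk.length_support]
    have : q.length ≠ 0 := fun h0 => hcm (q.eq_of_length_eq_zero h0)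
    omega
  have hk4 : 4 ≤ k := by omega
  have hWL : ∃ W : G.Walk d a, W.support = L := by
    refine ⟨SimpleGraph.Walk.cons hcd.symm (q.concat hma), ?_⟩
    simp [SimpleGraph.Walk.support_cons, SimpleGraph.Walk.support_concat, hL, hT,
      List.concat_eq_append]
  obtain ⟨W, hWs⟩ := hWL
  have htail : ∀ x ∈ T, x ≤ a := by
    intro x hx
    rw [hT, List.mem_append] at hx
    rcases hx with hx | hx
    · exact (hqsup x hx).le
    · simp at hx; omega
  have hmemL : ∀ x ∈ L, x ≤ d := by
    intro x hx
    rw [hL, List.mem_cons] at hx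
    rcases hx with rfl | hx
    · exact le_refl x
    · exact le_trans (htail x hx) had.le
  have hnd : L.Nodup := by
    rw [hL, List.nodup_cons]
    refine ⟨fun hdm => absurd (htail d hdm) (not_le.2 had), ?_⟩
    rw [hT]
    refine List.Nodup.append hqnd (List.nodup_singleton a) ?_
    intro x hx hx'
    simp only [List.mem_singleton] at hx'
    exact absurd (hqsup x hx) (by omega)
  -- value computations
  have hv0 : L.getD 0 0 = d := by rw [hL]; exact List.getD_cons_zero
  have hv1 : L.getD 1 0 = c := by
    rw [hL, List.getD_cons_succ, hT]
    rw [List.getD_append _ _ _ _ (by omega)]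
    rw [q.support_eq_cons]
    exact List.getD_cons_zero
  have hvlast : L.getD (k - 1) 0 = a := by
    have hk1 : k - 1 = q.support.length + 1 := by omega
    rw [hL, hk1, List.getD_cons_succ, hT,
      List.getD_append_right _ _ _ _ (le_refl _)]
    simp
  have hvpen : L.getD (k - 2) 0 = m := by
    have hk2 : k - 2 = q.support.length := by omega
    rw [hL, hk2]
    obtain ⟨n, hn⟩ : ∃ n, q.support.length = n + 1 := ⟨q.support.length - 1, by omega⟩
    rw [hn, List.getD_cons_succ, hT, List.getD_append _ _ _ _ (by omega)]
    rw [List.getD_eq_getElem _ _ (by omega)]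
    have := q.getLast_support
    rw [List.getLast_eq_getElem] at this
    simpa [hn] using this
  -- assemble the forbidden path
  refine hforb ⟨k, fun i => L.getD i 0, hk4, ?_, ?_, ?_, ?_, ?_⟩
  · intro i hi j hj hij
    simp only [Set.mem_Iio] at hi hj
    have hij : L.getD i 0 = L.getD j 0 := hij
    rw [List.getD_eq_getElem _ _ hi, List.getD_eq_getElem _ _ hj] at hij
    exact hnd.getElem_inj_iff.1 hij
  · intro i hi
    have := walk_support_chain W i (by rw [hWs]; exact hi)
    rwa [hWs] at this
  · intro i hi
    show L.getD i 0 ≤ L.getD 0 0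
    rw [hv0, List.getD_eq_getElem _ _ hi]
    exact hmemL _ (List.getElem_mem hi)
  · intro i h1 hik
    show L.getD i 0 ≤ L.getD (k - 1) 0
    rw [hvlast]
    obtain ⟨n, rfl⟩ : ∃ n, i = n + 1 := ⟨i - 1, by omega⟩
    rw [hL, List.getD_cons_succ]
    have hn : n < T.length := by
      have : L.length = T.length + 1 := by rw [hL]; simp
      omega
    rw [List.getD_eq_getElem _ _ hn]
    exact htail _ (List.getElem_mem hn)
  · show L.getD (k - 2) 0 < L.getD 1 0
    rw [hvpen, hv1]; exact hmc
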